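/- Let G be a group acting on a set X with a set J ⊆ X of orbit representatives and stabilizers G_j for j ∈ J. Fix q > 0 and suppose each stabilizer G_j satisfies H^q_b(G_j; ℝ) = 0 with q-th vanishing modulus bounded by a uniform constant C independent of j. Then H^q_b(G; ℓ^∞(X)) = 0, where G acts on ℓ^∞(X) via the action on X. -/

import Mathlib

/-- A homogeneous cochain is `G`-invariant. -/
def IsInvCochain {G : Type*} [Group G] {n : ℕ} (c : (Fin n → G) → ℝ) : Prop :=
  ∀ (g : G) (x : Fin n → G), c (fun i => g * x i) = c x

/-- The simplicial coboundary on homogeneous cochains (trivial coefficients). -/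
noncomputable def gcoboundary {G : Type*} [Group G] {n : ℕ}
    (c : (Fin n → G) → ℝ) : (Fin (n + 1) → G) → ℝ :=
  fun x => ∑ i : Fin (n + 1), (-1 : ℝ) ^ (i : ℕ) * c (x ∘ i.succAbove)

/-- A bounded function of two arguments. -/
def IsBddFun₂ {α β : Type*} (c : α → β → ℝ) : Prop := ∃ C : ℝ, ∀ x y, |c x y| ≤ C

/-- A homogeneous cochain with values in `ℓ^∞(X)` is `G`-equivariant. -/
def IsEquivCochain {G X : Type*} [Group G] [MulAction G X] {n : ℕ}
    (c : (Fin n → G) → X → ℝ) : Prop :=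
  ∀ (g : G) (x : Fin n → G) (v : X), c (fun i => g * x i) (g • v) = c x v

/-- The simplicial coboundary on homogeneous cochains with values in `ℓ^∞(X)`. -/
noncomputable def gcoboundaryC {G X : Type*} [Group G] {n : ℕ}
    (c : (Fin n → G) → X → ℝ) : (Fin (n + 1) → G) → X → ℝ :=
  fun x v => ∑ i : Fin (n + 1), (-1 : ℝ) ^ (i : ℕ) * c (x ∘ i.succAbove) v

namespace VanLinfty

variable {S : Type*}

/-- Delete the `k`-th coordinate. -/
def del (k : ℕ) (x : ℕ → S) : ℕ → S := fun m => if m < k then x m else x (m + 1)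

/-- Prism operator on tuples. -/
def pr (p : S → S) (i : ℕ) (x : ℕ → S) : ℕ → S :=
  fun m => if m ≤ i then x m else p (x (m - 1))

/-- Simplicial coboundary, `ℕ`-indexed. -/
noncomputable def D (m : ℕ) (F : (ℕ → S) → ℝ) : (ℕ → S) → ℝ :=
  fun x => ∑ k ∈ Finset.range m, (-1 : ℝ) ^ k * F (del k x)

/-- Prism homotopy, `ℕ`-indexed. -/
noncomputable def Hh (p : S → S) (m : ℕ) (F : (ℕ → S) → ℝ) : (ℕ → S) → ℝ :=
  fun x => ∑ i ∈ Finset.range m, (-1 : ℝ) ^ i * F (pr p i x)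

lemma lemA (p : S → S) (i k : ℕ) (hk : k ≤ i) (x : ℕ → S) :
    del k (pr p (i + 1) x) = pr p i (del k x) := by
  funext m
  simp only [del, pr]
  split_ifs <;>
    first
      | rfl
      | (exfalso; omega)
      | (congr 1 <;> omega)
      | (congr 2 <;> omega)
      | (congr 3 <;> omega)

lemma lemB (p : S → S) (i k : ℕ) (hk : i + 1 ≤ k) (x : ℕ → S) :
    del (k + 1) (pr p i x) = pr p i (del k x) := by
  funext m
  simp only [del, pr]
  split_ifs <;>
    first
      | rfl
      | (exfalso; omega)
      | (congr 1 <;> omega)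
      | (congr 2 <;> omega)
      | (congr 3 <;> omega)

lemma lemC (p : S → S) (i : ℕ) (x : ℕ → S) :
    del (i + 1) (pr p (i + 1) x) = del (i + 1) (pr p i x) := by
  funext m
  simp only [del, pr]
  split_ifs <;>
    first
      | rfl
      | (exfalso; omega)
      | (congr 1 <;> omega)
      | (congr 2 <;> omega)
      | (congr 3 <;> omega)

lemma lemC0 (p : S → S) (x : ℕ → S) :
    del 0 (pr p 0 x) = fun m => p (x m) := by
  funext m
  simp only [del, pr]
  split_ifs <;>
    first
      | rfl
      | (exfalso; omega)
      | (congr 1 <;> omega)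
      | (congr 2 <;> omega)

lemma lemCtop (p : S → S) (n : ℕ) (x : ℕ → S) (m : ℕ) (hm : m ≤ n) :
    del (n + 1) (pr p n x) m = x m := by
  simp only [del, pr]
  rw [if_pos (by omega), if_pos hm]

/-- The prism homotopy identity. -/
lemma prism (p : S → S) (n : ℕ) (F : (ℕ → S) → ℝ)
    (hdep : ∀ x y : ℕ → S, (∀ m, m ≤ n → x m = y m) → F x = F y)
    (x : ℕ → S) :
    D (n + 1) (Hh p n F) x + Hh p (n + 1) (D (n + 2) F) x
      = F (fun m => p (x m)) - F x := by
  classical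
  set f : ℕ → ℕ → ℝ := fun i k => (-1 : ℝ) ^ i * ((-1 : ℝ) ^ k * F (del k (pr p i x))) with hf
  set g : ℕ → ℕ → ℝ := fun i k => (-1 : ℝ) ^ i * ((-1 : ℝ) ^ k * F (pr p i (del k x))) with hg
  have hD : D (n + 1) (Hh p n F) x = ∑ i ∈ Finset.range n, ∑ k ∈ Finset.range (n + 1), g i k := by
    rw [Finset.sum_comm]
    unfold D Hh
    refine Finset.sum_congr rfl fun k _ => ?_
    rw [Finset.mul_sum]
    refine Finset.sum_congr rfl fun i _ => ?_
    simp only [hg]; ring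
  have hH : Hh p (n + 1) (D (n + 2) F) x
      = ∑ i ∈ Finset.range (n + 1), ∑ k ∈ Finset.range (n + 2), f i k := by
    unfold D Hh
    refine Finset.sum_congr rfl fun i _ => ?_
    rw [Finset.mul_sum]
  -- split inner sums
  have hsplit : ∀ i ∈ Finset.range (n + 1),
      ∑ k ∈ Finset.range (n + 2), f i k
        = (∑ k ∈ Finset.range i, f i k) + (f i i + f i (i + 1))
          + ∑ k ∈ Finset.Ico (i + 2) (n + 2), f i k := by
    intro i hi
    rw [Finset.mem_range] at hi
    have h1 : (∑ k ∈ Finset.Ico 0 i, f i k) + (∑ k ∈ Finset.Ico i (n + 2), f i k)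
        = ∑ k ∈ Finset.Ico 0 (n + 2), f i k :=
      Finset.sum_Ico_consecutive _ (by omega) (by omega)
    have h2 : (∑ k ∈ Finset.Ico i (i + 2), f i k) + (∑ k ∈ Finset.Ico (i + 2) (n + 2), f i k)
        = ∑ k ∈ Finset.Ico i (n + 2), f i k :=
      Finset.sum_Ico_consecutive _ (by omega) (by omega)
    have h3 : (∑ k ∈ Finset.Ico i (i + 2), f i k) = f i i + f i (i + 1) := by
      rw [Finset.sum_Ico_succ_top (by omega), Finset.sum_Ico_succ_top (by omega),
        Finset.Ico_self, Finset.sum_empty, zero_add]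
    rw [Finset.range_eq_Ico, ← h1, ← h2, h3, ← Finset.range_eq_Ico]
    ring
  rw [hH, Finset.sum_congr rfl hsplit]
  rw [Finset.sum_add_distrib, Finset.sum_add_distrib]
  -- Part A
  have hA : (∑ i ∈ Finset.range (n + 1), ∑ k ∈ Finset.range i, f i k)
      = -∑ i ∈ Finset.range n, ∑ k ∈ Finset.range (i + 1), g i k := by
    rw [Finset.sum_range_succ' (fun i => ∑ k ∈ Finset.range i, f i k) n]
    simp only [Finset.range_zero, Finset.sum_empty, add_zero]
    rw [← Finset.sum_neg_distrib]
    refine Finset.sum_congr rfl fun i _ => ?_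
    rw [← Finset.sum_neg_distrib]
    refine Finset.sum_congr rfl fun k hk => ?_
    rw [Finset.mem_range] at hk
    simp only [hf, hg, lemA p i k (by omega) x]
    rw [pow_succ]
    ring
  -- Part C
  have hC : (∑ i ∈ Finset.range (n + 1), ∑ k ∈ Finset.Ico (i + 2) (n + 2), f i k)
      = -∑ i ∈ Finset.range n, ∑ k ∈ Finset.Ico (i + 1) (n + 1), g i k := by
    rw [Finset.sum_range_succ]
    rw [Finset.Ico_self, Finset.sum_empty, add_zero]
    rw [← Finset.sum_neg_distrib]
    refine Finset.sum_congr rfl fun i hi => ?_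
    rw [Finset.mem_range] at hi
    rw [Finset.sum_Ico_eq_sum_range, Finset.sum_Ico_eq_sum_range]
    have hrange : n + 2 - (i + 2) = n + 1 - (i + 1) := by omega
    rw [hrange, ← Finset.sum_neg_distrib]
    refine Finset.sum_congr rfl fun t _ => ?_
    have hB' : del (i + 1 + t + 1) (pr p i x) = pr p i (del (i + 1 + t) x) :=
      lemB p i (i + 1 + t) (by omega) x
    have : i + 2 + t = i + 1 + t + 1 := by omega
    simp only [hf, hg, this, hB']
    rw [pow_succ]
    ring
  -- Part B (seam, telescoping)
  have hBseam : (∑ i ∈ Finset.range (n + 1), (f i i + f i (i + 1)))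
      = F (fun m => p (x m)) - F x := by
    have hterm : ∀ i, f i i + f i (i + 1)
        = F (del i (pr p i x)) - F (del (i + 1) (pr p (i + 1) x)) := by
      intro i
      simp only [hf, lemC p i x]
      have hsq : (-1 : ℝ) ^ i * (-1 : ℝ) ^ i = 1 := by
        rw [← pow_add]
        exact Even.neg_one_pow ⟨i, by omega⟩
      linear_combination (F (del i (pr p i x)) - F (del (i + 1) (pr p i x))) * hsq
    calc (∑ i ∈ Finset.range (n + 1), (f i i + f i (i + 1)))
        = ∑ i ∈ Finset.range (n + 1),
            ((fun j => F (del j (pr p j x))) i - (fun j => F (del j (pr p j x))) (i + 1)) := by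
          refine Finset.sum_congr rfl fun i _ => ?_
          exact hterm i
      _ = F (del 0 (pr p 0 x)) - F (del (n + 1) (pr p (n + 1) x)) :=
          Finset.sum_range_sub' (fun j => F (del j (pr p j x))) (n + 1)
      _ = F (fun m => p (x m)) - F x := by
          rw [lemC0, lemC p n x]
          congr 1
          exact hdep _ _ (fun m hm => lemCtop p n x m hm)
  rw [hA, hC, hBseam, hD]
  have hAC : (∑ i ∈ Finset.range n, ∑ k ∈ Finset.range (i + 1), g i k)
      + (∑ i ∈ Finset.range n, ∑ k ∈ Finset.Ico (i + 1) (n + 1), g i k)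
      = ∑ i ∈ Finset.range n, ∑ k ∈ Finset.range (n + 1), g i k := by
    rw [← Finset.sum_add_distrib]
    refine Finset.sum_congr rfl fun i hi => ?_
    rw [Finset.mem_range] at hi
    rw [Finset.range_eq_Ico, Finset.range_eq_Ico]
    exact Finset.sum_Ico_consecutive _ (by omega) (by omega)
  linarith [hAC]

lemma prism_of_cocycle (p : S → S) (n : ℕ) (F : (ℕ → S) → ℝ)
    (hdep : ∀ x y : ℕ → S, (∀ m, m ≤ n → x m = y m) → F x = F y)
    (hcoc : ∀ x, D (n + 2) F x = 0) (x : ℕ → S) :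
    D (n + 1) (Hh p n F) x = F (fun m => p (x m)) - F x := by
  have h1 := prism p n F hdep x
  have h2 : Hh p (n + 1) (D (n + 2) F) x = 0 := by
    unfold Hh
    refine Finset.sum_eq_zero fun i _ => ?_
    rw [hcoc]
    ring
  linarith

lemma Hh_dep (p : S → S) (n : ℕ) (F : (ℕ → S) → ℝ)
    (hF : ∀ x y : ℕ → S, (∀ m, m ≤ n → x m = y m) → F x = F y)
    (x y : ℕ → S) (h : ∀ m, m < n → x m = y m) : Hh p n F x = Hh p n F y := by
  unfold Hh
  refine Finset.sum_congr rfl fun i hi => ?_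
  rw [Finset.mem_range] at hi
  congr 1
  apply hF
  intro m hm
  simp only [pr]
  split_ifs with h1
  · exact h m (by omega)
  · rw [h (m - 1) (by omega)]

lemma del_succAbove {n : ℕ} (x : ℕ → S) (k : Fin (n + 1)) (j : Fin n) :
    x ((k.succAbove j : Fin (n + 1)) : ℕ) = del (k : ℕ) x (j : ℕ) := by
  by_cases h : (j : ℕ) < (k : ℕ)
  · rw [Fin.succAbove_of_castSucc_lt _ _ (by rwa [Fin.lt_def])]
    simp [del, h]
  · rw [Fin.succAbove_of_le_castSucc _ _ (by rw [Fin.le_def]; simpa using not_lt.mp h)]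
    simp [del, h]

lemma gcoboundary_eq_D {G : Type*} [Group G] {n : ℕ} (F : (Fin (n + 1) → G) → ℝ) (x : ℕ → G) :
    D (n + 2) (fun z : ℕ → G => F (fun i : Fin (n + 1) => z i)) x
      = gcoboundary F (fun i : Fin (n + 2) => x i) := by
  unfold gcoboundary D
  rw [← Fin.sum_univ_eq_sum_range
    (fun k => (-1 : ℝ) ^ k * F (fun i : Fin (n + 1) => del k x i)) (n + 2)]
  refine Finset.sum_congr rfl fun i _ => ?_
  refine congrArg _ (congrArg F (funext fun j => ?_))
  exact (del_succAbove x i j).symm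

end VanLinfty

open VanLinfty

/-- let `G` act on `X` with a set `J` of orbit representatives.  Fix `q > 0`
and suppose each stabilizer `G_j` (`j ∈ J`) has `H^q_b(G_j;ℝ) = 0` with `q`-th vanishing
modulus bounded by a uniform constant `C`.  Then `H^q_b(G; ℓ^∞(X)) = 0`. -/
theorem vanishing_with_linfty_coefficients {G X : Type*} [Group G] [MulAction G X]
    (q : ℕ) (hq : 0 < q) (J : Set X)
    (hreps : ∀ x : X, ∃! j : X, j ∈ J ∧ x ∈ MulAction.orbit G j)
    (C : ℝ)
    (hstab : ∀ j ∈ J,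
      ∀ c : (Fin (q + 1) → MulAction.stabilizer G j) → ℝ, IsInvCochain c →
        gcoboundary c = 0 → (∀ x, |c x| ≤ 1) →
        ∃ b : (Fin q → MulAction.stabilizer G j) → ℝ, IsInvCochain b ∧
          gcoboundary b = c ∧ ∀ y, |b y| ≤ C) :
    ∀ c : (Fin (q + 1) → G) → X → ℝ, IsEquivCochain c → IsBddFun₂ c →
      gcoboundaryC c = 0 →
      ∃ b : (Fin q → G) → X → ℝ, IsEquivCochain b ∧ IsBddFun₂ b ∧ gcoboundaryC b = c := by
  intro c hc hbdd hcoc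
  classical
  obtain ⟨C₀, hC₀⟩ := hbdd
  set M : ℝ := |C₀| + 1 with hM
  have hM0 : 0 < M := by positivity
  have hcM : ∀ (y : Fin (q + 1) → G) (v : X), |c y v| ≤ M := fun y v =>
    le_trans (hC₀ y v) (le_trans (le_abs_self C₀) (by simp [hM]))
  choose j hj using hreps
  have hjJ : ∀ v, j v ∈ J := fun v => (hj v).1.1
  choose gx hgx using fun v => MulAction.mem_orbit_iff.mp (hj v).1.2
  have hjfix : ∀ j₀ ∈ J, ∀ w ∈ MulAction.orbit G j₀, j w = j₀ := by
    intro j₀ h0 w hw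
    exact ((hj w).2 j₀ ⟨h0, hw⟩).symm
  have hjsmul : ∀ (g : G) (v : X), j (g • v) = j v := by
    intro g v
    apply hjfix (j v) (hjJ v)
    exact MulAction.mem_orbit_iff.mpr ⟨g * gx v, by rw [mul_smul, hgx v]⟩
  -- the per-representative construction
  have key : ∀ j₀ : X, ∃ B : (Fin q → G) → ℝ, j₀ ∈ J →
      ((∀ s : G, s • j₀ = j₀ → ∀ y : Fin q → G, B (fun i => s * y i) = B y) ∧
       (∀ y : Fin (q + 1) → G, gcoboundary B y = c y j₀) ∧
       (∀ y, |B y| ≤ M * C + q * M)) := by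
    intro j₀
    by_cases hj₀ : j₀ ∈ J
    swap
    · exact ⟨0, fun h => absurd h hj₀⟩
    -- the retraction p onto the stabilizer
    set p : G → G := fun g => g * gx (g⁻¹ • j₀) with hp
    have hpj : ∀ g : G, j (g⁻¹ • j₀) = j₀ := fun g =>
      hjfix j₀ hj₀ _ (MulAction.mem_orbit j₀ g⁻¹)
    have hp1 : ∀ g : G, p g • j₀ = j₀ := by
      intro g
      have h1 := hgx (g⁻¹ • j₀)
      rw [hpj g] at h1
      show (g * gx (g⁻¹ • j₀)) • j₀ = j₀
      rw [mul_smul, h1, smul_inv_smul]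
    have hp2 : ∀ s g : G, s • j₀ = j₀ → p (s * g) = s * p g := by
      intro s g hs
      have hs' : s⁻¹ • j₀ = j₀ := by
        nth_rewrite 1 [← hs]
        exact inv_smul_smul s j₀
      show s * g * gx ((s * g)⁻¹ • j₀) = s * (g * gx (g⁻¹ • j₀))
      rw [mul_inv_rev, mul_smul, hs', mul_assoc]
    -- the restricted cocycle
    set F : (Fin (q + 1) → G) → ℝ := fun y => c y j₀ with hF
    have hFinv : ∀ s : G, s • j₀ = j₀ → ∀ y, F (fun i => s * y i) = F y := by
      intro s hs y
      have h1 := hc s y j₀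
      rw [hs] at h1
      exact h1
    have hFcoc : ∀ y : Fin (q + 2) → G, gcoboundary F y = 0 := by
      intro y
      have h0 : gcoboundaryC c y j₀ = 0 := by rw [hcoc]; rfl
      calc gcoboundary F y = gcoboundaryC c y j₀ := by
            simp only [gcoboundary, gcoboundaryC, hF]
        _ = 0 := h0
    set Fe : (ℕ → G) → ℝ := fun z => F (fun i : Fin (q + 1) => z i) with hFe
    have hFedep : ∀ x y : ℕ → G, (∀ m, m ≤ q → x m = y m) → Fe x = Fe y := by
      intro x y h
      simp only [hFe]
      exact congrArg F (funext fun i => h i (Nat.lt_succ_iff.mp i.isLt))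
    have hFecoc : ∀ x : ℕ → G, D (q + 2) Fe x = 0 := by
      intro x
      simp only [hFe]
      rw [gcoboundary_eq_D F x]
      exact hFcoc _
    have hFebd : ∀ x, |Fe x| ≤ M := fun x => by simp only [hFe, hF]; exact hcM _ j₀
    -- the stabilizer-valued retraction and the induced cochain
    have hK : ∀ g : G, p g ∈ MulAction.stabilizer G j₀ := fun g =>
      MulAction.mem_stabilizer_iff.mpr (hp1 g)
    set pK : G → MulAction.stabilizer G j₀ := fun g => ⟨p g, hK g⟩ with hpK
    set f' : (Fin (q + 1) → MulAction.stabilizer G j₀) → ℝ :=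
      fun z => F (fun i => (z i : G)) / M with hf'
    have hf'inv : IsInvCochain f' := by
      intro s z
      simp only [hf']
      congr 1
      exact hFinv (s : G) (MulAction.mem_stabilizer_iff.mp s.2) (fun i => (z i : G))
    have hf'coc : gcoboundary f' = 0 := by
      funext z
      show (∑ i : Fin (q + 2), (-1 : ℝ) ^ (i : ℕ) * f' (z ∘ i.succAbove)) = 0
      simp only [hf']
      rw [show (∑ i : Fin (q + 2), (-1 : ℝ) ^ (i : ℕ)
            * (F (fun t => ((z ∘ i.succAbove) t : G)) / M))
          = (∑ i : Fin (q + 2), (-1 : ℝ) ^ (i : ℕ)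
            * F (fun t => ((z ∘ i.succAbove) t : G))) / M from by
        rw [Finset.sum_div]
        exact Finset.sum_congr rfl fun i _ => (mul_div_assoc _ _ _).symm]
      have h2 : (∑ i : Fin (q + 2), (-1 : ℝ) ^ (i : ℕ)
          * F (fun t => ((z ∘ i.succAbove) t : G))) = 0 := hFcoc (fun t => (z t : G))
      rw [h2, zero_div]
    have hf'bd : ∀ z, |f' z| ≤ 1 := by
      intro z
      simp only [hf', abs_div, abs_of_pos hM0]
      rw [div_le_one hM0]
      simp only [hF]
      exact hcM _ j₀
    obtain ⟨b₀, hb₀inv, hb₀d, hb₀bd⟩ := hstab j₀ hj₀ f' hf'inv hf'coc hf'bd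
    -- transfer the primitive back to G
    set A : (Fin q → G) → ℝ := fun y => M * b₀ (fun i => pK (y i)) with hA
    have hdA : ∀ y : Fin (q + 1) → G, gcoboundary A y = F (fun i => p (y i)) := by
      intro y
      have h1 : gcoboundary A y = M * gcoboundary b₀ (fun i => pK (y i)) := by
        simp only [gcoboundary, hA, Finset.mul_sum]
        refine Finset.sum_congr rfl fun e _ => ?_
        rw [mul_left_comm]
        rfl
      rw [h1, hb₀d]
      simp only [hf']
      rw [mul_comm, div_mul_cancel₀ _ (ne_of_gt hM0)]
    have hAinv : ∀ s : G, s • j₀ = j₀ → ∀ y : Fin q → G,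
        A (fun i => s * y i) = A y := by
      intro s hs y
      simp only [hA]
      congr 1
      have h1 : (fun i => pK (s * y i))
          = fun i => (⟨s, MulAction.mem_stabilizer_iff.mpr hs⟩ :
              MulAction.stabilizer G j₀) * pK (y i) := by
        funext i
        exact Subtype.ext (hp2 s (y i) hs)
      rw [h1]
      exact hb₀inv _ _
    have hCnn : 0 ≤ C := le_trans (abs_nonneg _) (hb₀bd (fun _ => 1))
    have hAbd : ∀ y, |A y| ≤ M * C := by
      intro y
      simp only [hA, abs_mul, abs_of_pos hM0]
      exact mul_le_mul_of_nonneg_left (hb₀bd _) (le_of_lt hM0)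
    -- the homotopy correction term
    set hFf : (Fin q → G) → ℝ :=
      fun y => Hh p q Fe (fun m => if h : m < q then y ⟨m, h⟩ else 1) with hhFf
    have hFesmul : ∀ s : G, s • j₀ = j₀ → ∀ x : ℕ → G,
        Hh p q Fe (fun m => s * x m) = Hh p q Fe x := by
      intro s hs x
      unfold Hh
      refine Finset.sum_congr rfl fun i _ => ?_
      congr 1
      have h1 : pr p i (fun m => s * x m) = fun m => s * pr p i x m := by
        funext m
        simp only [pr]
        split_ifs with h
        · rfl
        · exact hp2 s (x (m - 1)) hs
      rw [h1]
      simp only [hFe]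
      exact hFinv s hs _
    have hFfinv : ∀ s : G, s • j₀ = j₀ → ∀ y : Fin q → G,
        hFf (fun i => s * y i) = hFf y := by
      intro s hs y
      simp only [hhFf]
      have h1 : Hh p q Fe (fun m => if h : m < q then (fun i => s * y i) ⟨m, h⟩ else 1)
          = Hh p q Fe (fun m => s * (if h : m < q then y ⟨m, h⟩ else s⁻¹)) := by
        apply Hh_dep p q Fe hFedep
        intro m hm
        simp only [dif_pos hm]
      rw [h1, hFesmul s hs]
      apply Hh_dep p q Fe hFedep
      intro m hm
      simp only [dif_pos hm]
    have hFfbd : ∀ y, |hFf y| ≤ q * M := by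
      intro y
      simp only [hhFf]
      unfold Hh
      calc |∑ i ∈ Finset.range q, (-1 : ℝ) ^ i
            * Fe (pr p i (fun m => if h : m < q then y ⟨m, h⟩ else 1))|
          ≤ ∑ i ∈ Finset.range q, |(-1 : ℝ) ^ i
            * Fe (pr p i (fun m => if h : m < q then y ⟨m, h⟩ else 1))| :=
            Finset.abs_sum_le_sum_abs _ _
        _ ≤ ∑ _i ∈ Finset.range q, M := by
            refine Finset.sum_le_sum fun i _ => ?_
            rw [abs_mul, abs_pow, abs_neg, abs_one, one_pow, one_mul]
            exact hFebd _
        _ = q * M := by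
            rw [Finset.sum_const, Finset.card_range, nsmul_eq_mul]
    have hdhFf : ∀ y : Fin (q + 1) → G,
        gcoboundary hFf y = F (fun i => p (y i)) - F y := by
      intro y
      set xe : ℕ → G := fun m => if h : m < q + 1 then y ⟨m, h⟩ else 1 with hxe
      have hxey : ∀ i : Fin (q + 1), xe i = y i := by
        intro i
        simp only [hxe, dif_pos i.isLt, Fin.eta]
      have h1 : gcoboundary hFf y = D (q + 1) (Hh p q Fe) xe := by
        simp only [gcoboundary, D]
        rw [← Fin.sum_univ_eq_sum_range
          (fun k => (-1 : ℝ) ^ k * Hh p q Fe (del k xe)) (q + 1)]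
        refine Finset.sum_congr rfl fun e _ => ?_
        congr 1
        simp only [hhFf]
        apply Hh_dep p q Fe hFedep
        intro m hm
        rw [dif_pos hm]
        have h2 := del_succAbove xe e ⟨m, hm⟩
        show y (e.succAbove ⟨m, hm⟩) = del (e : ℕ) xe m
        rw [← h2]
        exact (hxey _).symm
      rw [h1, prism_of_cocycle p q Fe hFedep hFecoc xe]
      have h3 : Fe (fun m => p (xe m)) = F (fun i => p (y i)) := by
        simp only [hFe]
        exact congrArg F (funext fun i => congrArg p (hxey i))
      have h4 : Fe xe = F y := by
        simp only [hFe]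
        exact congrArg F (funext fun i => hxey i)
      rw [h3, h4]
    refine ⟨fun y => A y - hFf y, fun _ => ⟨?_, ?_, ?_⟩⟩
    · intro s hs y
      show A (fun i => s * y i) - hFf (fun i => s * y i) = A y - hFf y
      rw [hAinv s hs y, hFfinv s hs y]
    · intro y
      have h1 : gcoboundary (fun y => A y - hFf y) y
          = gcoboundary A y - gcoboundary hFf y := by
        simp only [gcoboundary]
        rw [← Finset.sum_sub_distrib]
        exact Finset.sum_congr rfl fun i _ => by ring
      rw [h1, hdA, hdhFf]
      have : F y = c y j₀ := by rw [hF]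
      rw [← this]
      ring
    · intro y
      show |A y - hFf y| ≤ M * C + q * M
      calc |A y - hFf y| ≤ |A y| + |hFf y| := by
            rw [sub_eq_add_neg]
            exact le_trans (abs_add_le _ _) (le_of_eq (by rw [abs_neg]))
        _ ≤ M * C + q * M := add_le_add (hAbd y) (hFfbd y)
  choose Bf hBf using key
  refine ⟨fun y v => Bf (j v) (fun i => (gx v)⁻¹ * y i), ?_, ⟨M * C + q * M, ?_⟩, ?_⟩
  · -- equivariance
    intro g y v
    show Bf (j (g • v)) (fun i => (gx (g • v))⁻¹ * (g * y i))
        = Bf (j v) (fun i => (gx v)⁻¹ * y i)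
    have hjj : j (g • v) = j v := hjsmul g v
    rw [hjj]
    set s : G := (gx (g • v))⁻¹ * (g * gx v) with hs
    have hgv : gx (g • v) • j v = g • v := by
      have h1 := hgx (g • v)
      rwa [hjj] at h1
    have hsstab : s • j v = j v := by
      show ((gx (g • v))⁻¹ * (g * gx v)) • j v = j v
      rw [mul_smul, mul_smul, hgx v, inv_smul_eq_iff]
      exact hgv.symm
    have hargs : (fun i => (gx (g • v))⁻¹ * (g * y i))
        = fun i => s * ((gx v)⁻¹ * y i) := by
      funext i
      show (gx (g • v))⁻¹ * (g * y i) = ((gx (g • v))⁻¹ * (g * gx v)) * ((gx v)⁻¹ * y i)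
      group
    rw [hargs]
    exact (hBf (j v) (hjJ v)).1 s hsstab _
  · -- boundedness
    intro y v
    exact (hBf (j v) (hjJ v)).2.2 _
  · -- coboundary
    funext y v
    have h1 : gcoboundaryC (fun y v => Bf (j v) (fun i => (gx v)⁻¹ * y i)) y v
        = gcoboundary (Bf (j v)) (fun i => (gx v)⁻¹ * y i) := rfl
    rw [h1, (hBf (j v) (hjJ v)).2.1]
    have h2 := hc (gx v) (fun i => (gx v)⁻¹ * y i) (j v)
    rw [hgx v] at h2
    simp only [mul_inv_cancel_left] at h2
    exact h2.symm
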